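/- Let L ≥ 1 and let w : A → B → ℕ be the edge-multiplicity function of a finite bipartite multigraph G' on parts A and B, and suppose every node of G' has degree at most L. Then there exists a matching M of G' such that every node whose degree in G' equals L is matched in M and, moreover, L·|M| ≥ ∑_{a ∈ A} ∑_{b ∈ B} w a b, i.e. |M| is at least the total number of edges of G' divided by L. -/

import Mathlib

theorem regular_decomp (L : ℕ) {X Y : Type*} [Fintype X] [Fintype Y]
    [DecidableEq X] [DecidableEq Y]
    (w : X → Y → ℕ) (hX : ∀ x, ∑ y, w x y = L) (hY : ∀ y, ∑ x, w x y = L) :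
    ∃ f : Fin L → X → Y, (∀ i, Function.Injective (f i)) ∧
      ∀ x y, w x y = (Finset.univ.filter (fun i => f i x = y)).card := by
  induction L generalizing w with
  | zero =>
    refine ⟨fun i => i.elim0, fun i => i.elim0, fun x y => ?_⟩
    have h0 : w x y = 0 := Finset.sum_eq_zero_iff.mp (hX x) y (Finset.mem_univ y)
    simp [h0]
  | succ L ih =>
    -- Hall's condition
    set t : X → Finset Y := fun x => Finset.univ.filter (fun y => 1 ≤ w x y) with ht
    have hall : ∀ S : Finset X, S.card ≤ (S.biUnion t).card := by
      intro S
      have key : (L + 1) * S.card ≤ (L + 1) * (S.biUnion t).card := by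
        calc (L + 1) * S.card = ∑ x ∈ S, ∑ y, w x y := by
              rw [Finset.sum_congr rfl (fun x _ => hX x)]
              simp [mul_comm]
          _ = ∑ x ∈ S, ∑ y ∈ S.biUnion t, w x y := by
              refine Finset.sum_congr rfl (fun x hx => ?_)
              refine (Finset.sum_subset (Finset.subset_univ _) ?_).symm
              intro y _ hy
              by_contra h
              exact hy (Finset.mem_biUnion.mpr ⟨x, hx, by
                simp [ht, Nat.one_le_iff_ne_zero.mpr h]⟩)
          _ = ∑ y ∈ S.biUnion t, ∑ x ∈ S, w x y := Finset.sum_comm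
          _ ≤ ∑ y ∈ S.biUnion t, (L + 1) := by
              refine Finset.sum_le_sum (fun y _ => ?_)
              calc ∑ x ∈ S, w x y ≤ ∑ x, w x y :=
                    Finset.sum_le_sum_of_subset (Finset.subset_univ _)
                _ = L + 1 := hY y
          _ = (L + 1) * (S.biUnion t).card := by
              simp [mul_comm]
      exact Nat.le_of_mul_le_mul_left key (Nat.succ_pos L)
    obtain ⟨f0, hf0inj, hf0mem⟩ :=
      (Finset.all_card_le_biUnion_card_iff_exists_injective t).mp hall
    have hf0w : ∀ x, 1 ≤ w x (f0 x) := by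
      intro x
      have := hf0mem x
      simpa [ht] using this
    -- card X = card Y
    have hcard : Fintype.card X = Fintype.card Y := by
      have h1 : (L + 1) * Fintype.card X = (L + 1) * Fintype.card Y := by
        calc (L + 1) * Fintype.card X = ∑ x : X, ∑ y, w x y := by
              rw [Finset.sum_congr rfl (fun x _ => hX x)]; simp [mul_comm]
          _ = ∑ y : Y, ∑ x, w x y := Finset.sum_comm
          _ = (L + 1) * Fintype.card Y := by
              rw [Finset.sum_congr rfl (fun y _ => hY y)]; simp [mul_comm]
      exact Nat.eq_of_mul_eq_mul_left (Nat.succ_pos L) h1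
    have hf0bij : Function.Bijective f0 :=
      (Fintype.bijective_iff_injective_and_card f0).mpr ⟨hf0inj, hcard⟩
    -- the reduced multigraph
    set w' : X → Y → ℕ := fun x y => w x y - (if f0 x = y then 1 else 0) with hw'
    have hadd : ∀ x y, w' x y + (if f0 x = y then 1 else 0) = w x y := by
      intro x y
      rcases eq_or_ne (f0 x) y with h | h
      · subst h; simp [hw', Nat.sub_add_cancel (hf0w x)]
      · simp [hw', h]
    have hX' : ∀ x, ∑ y, w' x y = L := by
      intro x
      have h1 : ∑ y, w' x y + ∑ y, (if f0 x = y then 1 else 0) = L + 1 := by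
        rw [← Finset.sum_add_distrib]
        simp only [hadd]
        exact hX x
      have h2 : ∑ y, (if f0 x = y then (1:ℕ) else 0) = 1 := by simp
      omega
    have hY' : ∀ y, ∑ x, w' x y = L := by
      intro y
      have h1 : ∑ x, w' x y + ∑ x, (if f0 x = y then 1 else 0) = L + 1 := by
        rw [← Finset.sum_add_distrib]
        simp only [hadd]
        exact hY y
      obtain ⟨x0, hx0⟩ := hf0bij.surjective y
      have h2 : ∑ x, (if f0 x = y then (1:ℕ) else 0) = 1 := by
        have heq : ∀ x : X, (f0 x = y) ↔ (x = x0) :=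
          fun x => ⟨fun h => hf0inj (h.trans hx0.symm), fun h => h ▸ hx0⟩
        calc ∑ x, (if f0 x = y then (1:ℕ) else 0)
            = ∑ x, (if x = x0 then (1:ℕ) else 0) :=
              Finset.sum_congr rfl (fun x _ => by simp [heq x])
          _ = 1 := by simp
      omega
    obtain ⟨g, hginj, hgcard⟩ := ih w' hX' hY'
    refine ⟨Fin.cases f0 g, ?_, ?_⟩
    · intro i
      refine Fin.cases ?_ ?_ i
      · exact hf0inj
      · intro j; exact hginj j
    · intro x y
      have hc : (Finset.univ.filter (fun i : Fin (L+1) => Fin.cases f0 g i x = y)).card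
          = ∑ i : Fin (L+1), (if Fin.cases f0 g i x = y then 1 else 0) := by
        rw [Finset.card_filter]
      rw [hc, Fin.sum_univ_succ]
      simp only [Fin.cases_zero, Fin.cases_succ]
      have : ∑ i : Fin L, (if g i x = y then (1:ℕ) else 0)
          = (Finset.univ.filter (fun i : Fin L => g i x = y)).card := by
        rw [Finset.card_filter]
      rw [← hadd x y, hgcard x y, ← this, Nat.add_comm]
      congr 1

/-- Let `L ≥ 1` and let `w : A → B → ℕ` be the edge multiplicities of a finite
bipartite multigraph all of whose node degrees are at most `L`. Then there is a
matching in which every node of degree exactly `L` is matched and, moreover,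
`L·|M|` is at least the total number of edges. -/
theorem stmt_2 {A B : Type*} [Fintype A] [Fintype B]
    (L : ℕ) (hL : 1 ≤ L) (w : A → B → ℕ)
    (hdegA : ∀ a : A, ∑ b : B, w a b ≤ L)
    (hdegB : ∀ b : B, ∑ a : A, w a b ≤ L) :
    ∃ M : Finset (A × B),
      (∀ p ∈ M, 1 ≤ w p.1 p.2) ∧
      (∀ p ∈ M, ∀ q ∈ M, (p.1 = q.1 ∨ p.2 = q.2) → p = q) ∧
      (∀ a : A, (∑ b : B, w a b) = L → ∃ b : B, (a, b) ∈ M) ∧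
      (∀ b : B, (∑ a : A, w a b) = L → ∃ a : A, (a, b) ∈ M) ∧
      (∑ a : A, ∑ b : B, w a b) ≤ L * M.card := by
  classical
  -- padded L-regular bipartite multigraph on X = A ⊕ B, Y = B ⊕ A
  set W : (A ⊕ B) → (B ⊕ A) → ℕ := fun x y =>
    match x, y with
    | .inl a, .inl b => w a b
    | .inl a, .inr a' => if a = a' then L - ∑ b, w a b else 0
    | .inr b, .inl b' => if b = b' then L - ∑ a, w a b else 0
    | .inr b, .inr a => w a b
    with hWdef
  have hXreg : ∀ x, ∑ y, W x y = L := by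
    intro x
    cases x with
    | inl a =>
      rw [Fintype.sum_sum_type]
      have h1 : ∑ b : B, W (.inl a) (.inl b) = ∑ b, w a b := rfl
      have h2 : ∑ a' : A, W (.inl a) (.inr a')
          = ∑ a' : A, if a = a' then L - ∑ b, w a b else 0 := rfl
      rw [h1, h2, Finset.sum_ite_eq]
      simp only [Finset.mem_univ, if_true]
      have := hdegA a
      omega
    | inr b =>
      rw [Fintype.sum_sum_type]
      have h1 : ∑ b' : B, W (.inr b) (.inl b')
          = ∑ b' : B, if b = b' then L - ∑ a, w a b else 0 := rfl
      have h2 : ∑ a : A, W (.inr b) (.inr a) = ∑ a, w a b := rfl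
      rw [h1, h2, Finset.sum_ite_eq]
      simp only [Finset.mem_univ, if_true]
      have := hdegB b
      omega
  have hYreg : ∀ y, ∑ x, W x y = L := by
    intro y
    cases y with
    | inl b =>
      rw [Fintype.sum_sum_type]
      have h1 : ∑ a : A, W (.inl a) (.inl b) = ∑ a, w a b := rfl
      have h2 : ∑ b' : B, W (.inr b') (.inl b)
          = ∑ b' : B, if b' = b then L - ∑ a, w a b' else 0 := rfl
      rw [h1, h2, Finset.sum_ite_eq']
      simp only [Finset.mem_univ, if_true]
      have := hdegB b
      omega
    | inr a =>
      rw [Fintype.sum_sum_type]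
      have h1 : ∑ a' : A, W (.inl a') (.inr a)
          = ∑ a' : A, if a' = a then L - ∑ b, w a' b else 0 := rfl
      have h2 : ∑ b : B, W (.inr b) (.inr a) = ∑ b, w a b := rfl
      rw [h1, h2, Finset.sum_ite_eq']
      simp only [Finset.mem_univ, if_true]
      have := hdegA a
      omega
  obtain ⟨f, hfinj, hfcard⟩ := regular_decomp L W hXreg hYreg
  have hfbij : ∀ i, Function.Bijective (f i) := by
    intro i
    refine (Fintype.bijective_iff_injective_and_card (f i)).mpr ⟨hfinj i, ?_⟩
    simp [Fintype.card_sum, Nat.add_comm]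
  -- the candidate matchings
  set Ms : Fin L → Finset (A × B) := fun i =>
    Finset.univ.filter (fun p : A × B => f i (.inl p.1) = .inl p.2) with hMs
  -- total count
  have hsum : ∑ i : Fin L, (Ms i).card = ∑ a : A, ∑ b : B, w a b := by
    have step1 : ∀ i, (Ms i).card
        = ∑ p : A × B, (if f i (.inl p.1) = .inl p.2 then 1 else 0) := by
      intro i; rw [hMs]; rw [Finset.card_filter]
    calc ∑ i : Fin L, (Ms i).card
        = ∑ i : Fin L, ∑ p : A × B, (if f i (.inl p.1) = .inl p.2 then 1 else 0) :=
          Finset.sum_congr rfl (fun i _ => step1 i)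
      _ = ∑ p : A × B, ∑ i : Fin L, (if f i (.inl p.1) = .inl p.2 then 1 else 0) :=
          Finset.sum_comm
      _ = ∑ p : A × B, w p.1 p.2 := by
          refine Finset.sum_congr rfl (fun p _ => ?_)
          rw [← Finset.card_filter]
          exact (hfcard (.inl p.1) (.inl p.2)).symm
      _ = ∑ a : A, ∑ b : B, w a b := by
          exact Fintype.sum_prod_type (f := fun p : A × B => w p.1 p.2)
  -- pick the best matching
  have hexists : ∃ i : Fin L, (∑ a : A, ∑ b : B, w a b) ≤ L * (Ms i).card := by
    by_contra hcon
    push_neg at hcon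
    have : ∑ i : Fin L, L * (Ms i).card < ∑ i : Fin L, (∑ a : A, ∑ b : B, w a b) := by
      refine Finset.sum_lt_sum_of_nonempty ?_ (fun i _ => hcon i)
      exact Finset.univ_nonempty_iff.mpr (Fin.pos_iff_nonempty.mp hL)
    rw [← Finset.mul_sum, hsum] at this
    simp only [Finset.sum_const, Finset.card_univ, Fintype.card_fin, smul_eq_mul] at this
    omega
  obtain ⟨i, hi⟩ := hexists
  refine ⟨Ms i, ?_, ?_, ?_, ?_, hi⟩
  · -- edges exist
    intro p hp
    rw [hMs, Finset.mem_filter] at hp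
    have hmem : i ∈ Finset.univ.filter (fun j => f j (.inl p.1) = .inl p.2) :=
      Finset.mem_filter.mpr ⟨Finset.mem_univ i, hp.2⟩
    have : 1 ≤ (Finset.univ.filter (fun j => f j (.inl p.1) = .inl p.2)).card :=
      Finset.card_pos.mpr ⟨i, hmem⟩
    calc 1 ≤ _ := this
      _ = w p.1 p.2 := (hfcard (.inl p.1) (.inl p.2)).symm
  · -- matching condition
    intro p hp q hq hor
    rw [hMs, Finset.mem_filter] at hp hq
    rcases hor with h | h
    · have : (Sum.inl p.2 : B ⊕ A) = Sum.inl q.2 := by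
        rw [← hp.2, ← hq.2, h]
      exact Prod.ext h (Sum.inl.inj this)
    · have : f i (.inl p.1) = f i (.inl q.1) := by
        rw [hp.2, hq.2, h]
      have := hfinj i this
      exact Prod.ext (Sum.inl.inj this) h
  · -- degree-L vertices in A are matched
    intro a ha
    rcases hy : f i (.inl a) with b | a'
    · exact ⟨b, by rw [hMs]; exact Finset.mem_filter.mpr ⟨Finset.mem_univ _, hy⟩⟩
    · exfalso
      have hmem : i ∈ Finset.univ.filter (fun j => f j (.inl a) = .inr a') :=
        Finset.mem_filter.mpr ⟨Finset.mem_univ i, hy⟩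
      have h1 : 1 ≤ W (.inl a) (.inr a') := by
        rw [hfcard (.inl a) (.inr a')]
        exact Finset.card_pos.mpr ⟨i, hmem⟩
      have h2 : W (.inl a) (.inr a') = if a = a' then L - ∑ b, w a b else 0 := rfl
      rw [h2, ha] at h1
      rcases eq_or_ne a a' with h | h <;> simp [h] at h1
  · -- degree-L vertices in B are matched
    intro b hb
    obtain ⟨x, hx⟩ := (hfbij i).surjective (.inl b)
    rcases x with a | b'
    · exact ⟨a, by rw [hMs]; exact Finset.mem_filter.mpr ⟨Finset.mem_univ _, hx⟩⟩
    · exfalso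
      have hmem : i ∈ Finset.univ.filter (fun j => f j (.inr b') = .inl b) :=
        Finset.mem_filter.mpr ⟨Finset.mem_univ i, hx⟩
      have h1 : 1 ≤ W (.inr b') (.inl b) := by
        rw [hfcard (.inr b') (.inl b)]
        exact Finset.card_pos.mpr ⟨i, hmem⟩
      have h2 : W (.inr b') (.inl b) = if b' = b then L - ∑ a, w a b' else 0 := rfl
      rw [h2] at h1
      rcases eq_or_ne b' b with h | h
      · subst h; rw [hb] at h1; simp at h1
      · simp [h] at h1
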